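/- Let x₀ > 0 and let q : [x₀,∞) → ℝ be continuous, nonincreasing, with q(x₀) < 0. Define Q(y) = 2∫_{x₀}^y q(x) dx for y ≥ x₀. Then for every y ≥ x₀ the integral ∫_y^∞ e^{Q(z)} dz is finite and satisfies ∫_y^∞ e^{Q(z)} dz ≤ −e^{Q(y)}/(2 q(y)). -/

import Mathlib

open MeasureTheory Set

/-- For `q` continuous nonincreasing on `[x₀,∞)` with `q x₀ < 0` and
`Q(y) = 2∫_{x₀}^y q`, for every `y ≥ x₀` the integral `∫_y^∞ e^{Q(z)} dz` is finite
and bounded by `-e^{Q(y)}/(2 q(y))`. -/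
theorem stmt14 (x₀ : ℝ) (hx₀ : 0 < x₀) (q : ℝ → ℝ)
    (hqc : ContinuousOn q (Ici x₀)) (hqa : AntitoneOn q (Ici x₀))
    (hq0 : q x₀ < 0)
    (Q : ℝ → ℝ) (hQ : ∀ y, Q y = 2 * ∫ x in x₀..y, q x) :
    ∀ y ≥ x₀, IntegrableOn (fun z => Real.exp (Q z)) (Ici y) ∧
      (∫ z in Ici y, Real.exp (Q z)) ≤ -(Real.exp (Q y) / (2 * q y)) := by
  intro y hy
  have hqy : q y < 0 := lt_of_le_of_lt (hqa self_mem_Ici hy hy) hq0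
  set c : ℝ := 2 * q y with hc
  have hcneg : c < 0 := by simp [hc]; linarith
  -- interval integrability
  have hint : ∀ a b : ℝ, x₀ ≤ a → a ≤ b → IntervalIntegrable q volume a b := by
    intro a b ha hab
    exact (hqc.mono (fun x hx => le_trans ha (by
      rw [uIcc_of_le hab] at hx; exact hx.1))).intervalIntegrable
  -- pointwise bound on Q
  have hQ_le : ∀ z, y ≤ z → Q z ≤ Q y + c * (z - y) := by
    intro z hz
    have hsplit : (∫ x in x₀..y, q x) + ∫ x in y..z, q x = ∫ x in x₀..z, q x :=
      intervalIntegral.integral_add_adjacent_intervals (hint x₀ y le_rfl hy)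
        (hint y z hy hz)
    have hmono : (∫ x in y..z, q x) ≤ ∫ _x in y..z, q y := by
      apply intervalIntegral.integral_mono_on hz (hint y z hy hz)
        intervalIntegrable_const
      intro x hx
      exact hqa hy (le_trans hy hx.1) hx.1
    rw [intervalIntegral.integral_const, smul_eq_mul] at hmono
    rw [hQ z, hQ y, ← hsplit]
    nlinarith
  -- the dominating function
  set g : ℝ → ℝ := fun z => Real.exp (Q y + c * (z - y)) with hg
  have hgint : IntegrableOn g (Ioi y) := by
    have h1 : IntegrableOn (fun z : ℝ => Real.exp (-(-c) * z)) (Ioi y) :=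
      exp_neg_integrableOn_Ioi y (by linarith)
    have h2 : IntegrableOn (fun z : ℝ => Real.exp (Q y - c * y) * Real.exp (-(-c) * z)) (Ioi y) :=
      h1.const_mul (Real.exp (Q y - c * y))
    apply h2.congr_fun _ measurableSet_Ioi
    intro x _
    show Real.exp (Q y - c * y) * Real.exp (- -c * x) = Real.exp (Q y + c * (x - y))
    rw [← Real.exp_add]
    ring_nf
  have hFderiv : ∀ z : ℝ, HasDerivAt (fun z => Real.exp (Q y + c * (z - y)) / c)
      (g z) z := by
    intro z
    have h1 : HasDerivAt (fun z : ℝ => Q y + c * (z - y)) c z := by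
      simpa using (((hasDerivAt_id z).sub_const y).const_mul c).const_add (Q y)
    have h2 := (h1.exp).div_const c
    rw [mul_div_cancel_right₀ _ (ne_of_lt hcneg)] at h2
    exact h2
  have hFtend : Filter.Tendsto (fun z => Real.exp (Q y + c * (z - y)) / c)
      Filter.atTop (nhds 0) := by
    have h1 : Filter.Tendsto (fun z : ℝ => Q y + c * (z - y)) Filter.atTop Filter.atBot := by
      have hcz : Filter.Tendsto (fun z : ℝ => c * z) Filter.atTop Filter.atBot :=
        (Filter.tendsto_const_mul_atBot_of_neg hcneg).2 Filter.tendsto_id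
      have := Filter.tendsto_atBot_add_const_right Filter.atTop (Q y - c * y) hcz
      apply this.congr
      intro z; ring
    have := (Real.tendsto_exp_atBot.comp h1).div_const c
    simpa using this
  have hgval : ∫ z in Ioi y, g z = -(Real.exp (Q y) / c) := by
    have := integral_Ioi_of_hasDerivAt_of_tendsto
      (f := fun z => Real.exp (Q y + c * (z - y)) / c) (f' := g) (a := y) (m := 0)
      (hFderiv y).continuousAt.continuousWithinAt
      (fun x _ => hFderiv x) hgint hFtend
    rw [this]; simp [neg_div]
  -- integrability of exp ∘ Q on Ici y
  have hQcont : ContinuousOn Q (Ici x₀) := by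
    intro z hz
    have hzb : z < z + 1 := by linarith
    have hIcc : IntegrableOn q (Icc x₀ (z + 1)) :=
      (hqc.mono Icc_subset_Ici_self).integrableOn_Icc
    have huI : uIcc x₀ (z + 1) = Icc x₀ (z + 1) := uIcc_of_le (by linarith [hz.out])
    have hprim := intervalIntegral.continuousOn_primitive_interval (a := x₀) (b := z + 1)
      (μ := volume) (f := q) (by rw [huI]; exact hIcc)
    have hcw : ContinuousWithinAt (fun t => ∫ x in x₀..t, q x) (Icc x₀ (z + 1)) z := by
      have := hprim z (by rw [huI]; exact ⟨hz.out, by linarith⟩)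
      rwa [huI] at this
    have hmem : Icc x₀ (z + 1) ∈ nhdsWithin z (Ici x₀) := by
      rw [← Ici_inter_Iic]
      exact Filter.inter_mem self_mem_nhdsWithin
        (mem_nhdsWithin_of_mem_nhds (Iic_mem_nhds hzb))
    have : ContinuousWithinAt (fun t => ∫ x in x₀..t, q x) (Ici x₀) z :=
      hcw.mono_of_mem_nhdsWithin hmem
    have h2 : ContinuousWithinAt Q (Ici x₀) z := by
      have := this.const_smul (2 : ℝ)
      apply ContinuousWithinAt.congr this
      · intro t _; rw [hQ t]; simp
      · rw [hQ z]; simp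
    exact h2
  have hfmeas : AEStronglyMeasurable (fun z => Real.exp (Q z)) (volume.restrict (Ici y)) :=
    (Real.continuous_exp.comp_continuousOn (hQcont.mono (Ici_subset_Ici.mpr hy))).aestronglyMeasurable
      measurableSet_Ici
  have hbound : ∀ z ∈ Ici y, Real.exp (Q z) ≤ g z := by
    intro z hz
    exact Real.exp_le_exp.mpr (hQ_le z hz)
  have hfint : IntegrableOn (fun z => Real.exp (Q z)) (Ici y) := by
    rw [integrableOn_Ici_iff_integrableOn_Ioi]
    apply Integrable.mono' hgint
      (hfmeas.mono_measure (Measure.restrict_mono Ioi_subset_Ici_self le_rfl))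
    filter_upwards [ae_restrict_mem measurableSet_Ioi] with z hz
    rw [Real.norm_eq_abs, abs_of_pos (Real.exp_pos _)]
    exact hbound z (mem_Ici.mpr (le_of_lt hz))
  refine ⟨hfint, ?_⟩
  rw [MeasureTheory.integral_Ici_eq_integral_Ioi]
  calc ∫ z in Ioi y, Real.exp (Q z) ≤ ∫ z in Ioi y, g z := by
        apply setIntegral_mono_on
          (hfint.mono_set Ioi_subset_Ici_self) hgint measurableSet_Ioi
        intro z hz; exact hbound z (mem_Ici.mpr (le_of_lt hz))
    _ = -(Real.exp (Q y) / (2 * q y)) := by rw [hgval]
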